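/- Consider a zero-sum semidefinite network game with payoff operators Φ_{ij} and Φ_i(X) = Σ_{j ∈ N(i)} Φ_{ij}(X_j). Then the minimum of Σ_{i=1}^N λ_max(Φ_i(X)) over all profiles X of density matrices equals 0, and this minimum is attained; equivalently, the semidefinite program minimizing Σ_i w_i over (w, X) with X a profile of density matrices and Φ_i(X) ⪯ w_i I_{n_i} for all i has optimal value 0, attained by some feasible point. -/

import Mathlib

open Matrix Kronecker BigOperators ComplexOrder

noncomputable section

/-- Frobenius inner product `⟨A, B⟩ = tr(Aᴴ B)`. -/
def frob {α : Type*} [Fintype α] (A B : Matrix α α ℂ) : ℂ := (Aᴴ * B).trace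

/-- A density matrix: positive semidefinite with trace one. -/
def IsDensity {α : Type*} [Fintype α] (X : Matrix α α ℂ) : Prop :=
  X.PosSemidef ∧ X.trace = 1

/-- The payoff operator `Φ_R` associated with a payoff matrix `R`,
defined entrywise by `Φ_R(T)_{a,b} = Σ_{c,d} R_{(a,c),(b,d)} T_{d,c}`. -/
def payoffOp {k m : ℕ} (R : Matrix (Fin k × Fin m) (Fin k × Fin m) ℂ)
    (T : Matrix (Fin m) (Fin m) ℂ) : Matrix (Fin k) (Fin k) ℂ :=
  Matrix.of fun a b => ∑ c, ∑ d, R (a, c) (b, d) * T d c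

/-- The payoff of player `i`: `p_i(X) = Σ_{j ∈ N(i)} ⟨R_{ij}, X_i ⊗ X_j⟩` (a real number). -/
def payoff {N : ℕ} (G : SimpleGraph (Fin N)) [DecidableRel G.Adj] (n : Fin N → ℕ)
    (R : ∀ i j : Fin N, Matrix (Fin (n i) × Fin (n j)) (Fin (n i) × Fin (n j)) ℂ)
    (X : ∀ i, Matrix (Fin (n i)) (Fin (n i)) ℂ) (i : Fin N) : ℝ :=
  (∑ j ∈ G.neighborFinset i, frob (R i j) ((X i) ⊗ₖ (X j))).re

/-- `Φ_i(X) = Σ_{j ∈ N(i)} Φ_{ij}(X_j)`. -/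
def Phi {N : ℕ} (G : SimpleGraph (Fin N)) [DecidableRel G.Adj] (n : Fin N → ℕ)
    (R : ∀ i j : Fin N, Matrix (Fin (n i) × Fin (n j)) (Fin (n i) × Fin (n j)) ℂ)
    (X : ∀ i, Matrix (Fin (n i)) (Fin (n i)) ℂ) (i : Fin N) :
    Matrix (Fin (n i)) (Fin (n i)) ℂ :=
  ∑ j ∈ G.neighborFinset i, payoffOp (R i j) (X j)

/-- Nash equilibrium (best-response) condition for a strategy profile. -/
def IsNash {N : ℕ} (G : SimpleGraph (Fin N)) [DecidableRel G.Adj] (n : Fin N → ℕ)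
    (R : ∀ i j : Fin N, Matrix (Fin (n i) × Fin (n j)) (Fin (n i) × Fin (n j)) ℂ)
    (X : ∀ i, Matrix (Fin (n i)) (Fin (n i)) ℂ) : Prop :=
  ∀ i, ∀ S : Matrix (Fin (n i)) (Fin (n i)) ℂ, IsDensity S →
    payoff G n R (Function.update X i S) i ≤ payoff G n R X i

/-- The largest eigenvalue of a Hermitian matrix (junk value `0` otherwise). -/
def lamMax {k : ℕ} (A : Matrix (Fin k) (Fin k) ℂ) : ℝ :=
  if h : A.IsHermitian then ⨆ i, h.eigenvalues i else 0


open scoped RealInnerProductSpace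

lemma frob_eq {α : Type*} [Fintype α] (A B : Matrix α α ℂ) :
    frob A B = ∑ q, ∑ p, (starRingEnd ℂ) (A p q) * B p q := by
  simp [frob, Matrix.trace, Matrix.mul_apply, Matrix.diag, Matrix.conjTranspose_apply]

lemma frob_add_right {α : Type*} [Fintype α] (A B C : Matrix α α ℂ) :
    frob A (B + C) = frob A B + frob A C := by
  simp [frob, Matrix.mul_add]

lemma frob_smul_right {α : Type*} [Fintype α] (c : ℂ) (A B : Matrix α α ℂ) :
    frob A (c • B) = c * frob A B := by
  simp [frob, Matrix.mul_smul, Matrix.trace_smul, smul_eq_mul]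

lemma frob_one_right {α : Type*} [Fintype α] [DecidableEq α] (A : Matrix α α ℂ) :
    frob A ((1 : Matrix α α ℂ)) = (starRingEnd ℂ) A.trace := by
  simp [frob, Matrix.trace_conjTranspose]

lemma frob_sub_right {α : Type*} [Fintype α] (A B C : Matrix α α ℂ) :
    frob A (B - C) = frob A B - frob A C := by
  simp [frob, Matrix.mul_sub]

/-- the adjoint identity `⟨R, S ⊗ T⟩ = ⟨S, Φ_R(T)⟩` for Hermitian `R`, `S`. -/
lemma frob_kronecker_adjoint {k m : ℕ} {R : Matrix (Fin k × Fin m) (Fin k × Fin m) ℂ}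
    (hR : R.IsHermitian) {S : Matrix (Fin k) (Fin k) ℂ} (hS : S.IsHermitian)
    (T : Matrix (Fin m) (Fin m) ℂ) :
    frob R (S ⊗ₖ T) = frob S (payoffOp R T) := by
  rw [frob_eq, frob_eq]
  have hRc : ∀ p q, (starRingEnd ℂ) (R p q) = R q p := fun p q => hR.apply q p
  have hSc : ∀ p q, (starRingEnd ℂ) (S p q) = S q p := fun p q => hS.apply q p
  simp only [hRc, hSc, kroneckerMap_apply, payoffOp, Matrix.of_apply]
  simp only [Fintype.sum_prod_type, Finset.mul_sum]
  conv_rhs => rw [Finset.sum_comm]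
  conv_rhs => enter [2, a]; rw [Finset.sum_comm]
  refine Finset.sum_congr rfl fun a _ => Finset.sum_congr rfl fun c _ =>
    Finset.sum_congr rfl fun b _ => Finset.sum_congr rfl fun d _ => by ring

lemma payoffOp_isHermitian {k m : ℕ} {R : Matrix (Fin k × Fin m) (Fin k × Fin m) ℂ}
    (hR : R.IsHermitian) {T : Matrix (Fin m) (Fin m) ℂ} (hT : T.IsHermitian) :
    (payoffOp R T).IsHermitian := by
  have hRc : ∀ p q, star (R p q) = R q p := fun p q => hR.apply q p
  have hTc : ∀ p q, star (T p q) = T q p := fun p q => hT.apply q p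
  ext a b
  simp only [conjTranspose_apply, payoffOp, Matrix.of_apply, star_sum, star_mul']
  simp only [hRc, hTc]
  rw [Finset.sum_comm]

lemma psd_diag_nonneg {α : Type*} [Fintype α] [DecidableEq α]
    {M : Matrix α α ℂ} (hM : M.PosSemidef) (i : α) : 0 ≤ M i i := by
  have := hM.dotProduct_mulVec_nonneg (Pi.single i 1)
  simpa [Matrix.mulVec_single, dotProduct, Pi.star_apply, Pi.single_apply,
    apply_ite, Finset.sum_ite_eq'] using this

lemma posSemidef_trace_re_nonneg {α : Type*} [Fintype α] [DecidableEq α]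
    {M : Matrix α α ℂ} (hM : M.PosSemidef) : 0 ≤ M.trace.re := by
  rw [Matrix.trace]
  rw [Complex.re_sum]
  exact Finset.sum_nonneg fun i _ =>
    (Complex.le_def.mp (psd_diag_nonneg hM i)).1

open scoped MatrixOrder in
/-- trace of a product of two PSD matrices has nonnegative real part. -/
lemma frob_psd_psd_re_nonneg {α : Type*} [Fintype α] [DecidableEq α]
    {S M : Matrix α α ℂ} (hS : S.PosSemidef) (hM : M.PosSemidef) :
    0 ≤ (frob S M).re := by
  obtain ⟨B, hB⟩ := CStarAlgebra.nonneg_iff_eq_star_mul_self.mp hS.nonneg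
  rw [Matrix.star_eq_conjTranspose] at hB
  have h1 : frob S M = (B * M * Bᴴ).trace := by
    rw [frob, hS.isHermitian.eq, hB, Matrix.mul_assoc, Matrix.trace_mul_comm]
  rw [h1]
  exact posSemidef_trace_re_nonneg (hM.mul_mul_conjTranspose_same B)

section spectral

variable {k : ℕ} {A : Matrix (Fin k) (Fin k) ℂ}

lemma lamMax_spec (hA : A.IsHermitian) : lamMax A = ⨆ i, hA.eigenvalues i := by
  rw [lamMax, dif_pos hA]

lemma eigenvalues_le_lamMax (hA : A.IsHermitian) (i : Fin k) :
    hA.eigenvalues i ≤ lamMax A := by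
  rw [lamMax_spec hA]
  exact le_ciSup (Set.Finite.bddAbove (Set.finite_range _)) i

lemma lamMax_attained (hk : 0 < k) (hA : A.IsHermitian) :
    ∃ i₀, lamMax A = hA.eigenvalues i₀ := by
  haveI : Nonempty (Fin k) := ⟨⟨0, hk⟩⟩
  obtain ⟨i₀, hi₀⟩ := Finite.exists_max hA.eigenvalues
  exact ⟨i₀, le_antisymm (by rw [lamMax_spec hA]; exact ciSup_le hi₀)
    (eigenvalues_le_lamMax hA i₀)⟩

lemma unitary_mul_star (hA : A.IsHermitian) :
    (hA.eigenvectorUnitary : Matrix (Fin k) (Fin k) ℂ) *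
      (hA.eigenvectorUnitary : Matrix (Fin k) (Fin k) ℂ)ᴴ = 1 := by
  rw [← Matrix.star_eq_conjTranspose]
  exact Matrix.mem_unitaryGroup_iff.mp hA.eigenvectorUnitary.2

lemma star_mul_unitary (hA : A.IsHermitian) :
    (hA.eigenvectorUnitary : Matrix (Fin k) (Fin k) ℂ)ᴴ *
      (hA.eigenvectorUnitary : Matrix (Fin k) (Fin k) ℂ) = 1 := by
  rw [← Matrix.star_eq_conjTranspose]
  exact Matrix.mem_unitaryGroup_iff'.mp hA.eigenvectorUnitary.2

lemma spectral_package (hA : A.IsHermitian) :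
    ∃ (U : Matrix (Fin k) (Fin k) ℂ) (d : Fin k → ℝ),
      A = U * Matrix.diagonal (fun i => (d i : ℂ)) * Uᴴ ∧ U * Uᴴ = 1 ∧ Uᴴ * U = 1 ∧
      (∀ i, d i ≤ lamMax A) ∧ (0 < k → ∃ i₀, lamMax A = d i₀) := by
  refine ⟨↑hA.eigenvectorUnitary, hA.eigenvalues, ?_, unitary_mul_star hA,
    star_mul_unitary hA, eigenvalues_le_lamMax hA, fun hk => lamMax_attained hk hA⟩
  have h := hA.spectral_theorem
  rw [Unitary.conjStarAlgAut_apply, Matrix.star_eq_conjTranspose] at h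
  exact h

lemma frob_eq_trace_mul {α : Type*} [Fintype α] {S : Matrix α α ℂ} (hS : S.IsHermitian)
    (B : Matrix α α ℂ) : frob S B = (S * B).trace := by
  rw [show frob S B = (Sᴴ * B).trace from rfl, hS.eq]

/-- `⟨S, A⟩ ≤ λ_max(A)` for a density matrix `S` and Hermitian `A`. -/
lemma re_frob_le_lamMax (hk : 0 < k) {S : Matrix (Fin k) (Fin k) ℂ}
    (hS : IsDensity S) (hA : A.IsHermitian) : (frob S A).re ≤ lamMax A := by
  obtain ⟨U, d, hAeq, hU1, hU2, hle, -⟩ := spectral_package hA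
  have hTpsd : (Uᴴ * S * U).PosSemidef := hS.1.conjTranspose_mul_mul_same U
  have hTtr : (Uᴴ * S * U).trace = 1 := by
    rw [Matrix.trace_mul_cycle, hU1, Matrix.one_mul, hS.2]
  have h1 : frob S A = ∑ i, (Uᴴ * S * U) i i * (d i : ℂ) := by
    rw [frob_eq_trace_mul hS.1.isHermitian,
      show S * A = S * U * Matrix.diagonal (fun i => (d i : ℂ)) * Uᴴ by rw [hAeq]; noncomm_ring,
      Matrix.trace_mul_cycle, ← Matrix.mul_assoc, Matrix.trace]
    simp [Matrix.mul_diagonal, Matrix.diag]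
  have h2 : ∀ i, 0 ≤ ((Uᴴ * S * U) i i).re :=
    fun i => (Complex.le_def.mp (psd_diag_nonneg hTpsd i)).1
  have h3 : ∑ i, ((Uᴴ * S * U) i i).re = 1 := by
    have := congrArg Complex.re hTtr
    rw [Matrix.trace, Complex.re_sum] at this
    simpa [Matrix.diag] using this
  rw [h1, Complex.re_sum]
  calc ∑ i, ((Uᴴ * S * U) i i * (d i : ℂ)).re
      = ∑ i, ((Uᴴ * S * U) i i).re * d i := by
        refine Finset.sum_congr rfl fun i _ => ?_
        rw [mul_comm, Complex.re_ofReal_mul, mul_comm]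
    _ ≤ ∑ i, ((Uᴴ * S * U) i i).re * lamMax A := by
        refine Finset.sum_le_sum fun i _ =>
          mul_le_mul_of_nonneg_left (hle i) (h2 i)
    _ = 1 * lamMax A := by rw [← Finset.sum_mul, h3]
    _ = lamMax A := one_mul _

/-- there is a density matrix achieving `λ_max`. -/
lemma exists_density_lamMax (hk : 0 < k) (hA : A.IsHermitian) :
    ∃ S : Matrix (Fin k) (Fin k) ℂ, IsDensity S ∧ (frob S A).re = lamMax A := by
  obtain ⟨U, d, hAeq, hU1, hU2, hle, hatt⟩ := spectral_package hA
  obtain ⟨i₀, hi₀⟩ := hatt hk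
  set E : Matrix (Fin k) (Fin k) ℂ := Matrix.diagonal (Pi.single i₀ 1) with hE
  have hEpsd : E.PosSemidef := Matrix.PosSemidef.diagonal (by
    intro j
    rcases eq_or_ne j i₀ with h | h <;> simp [Pi.single_apply, h])
  have hSpsd : (U * E * Uᴴ).PosSemidef := hEpsd.mul_mul_conjTranspose_same U
  refine ⟨U * E * Uᴴ, ⟨hSpsd, ?_⟩, ?_⟩
  · rw [Matrix.trace_mul_cycle, hU2, Matrix.one_mul, hE, Matrix.trace_diagonal]
    simp
  · have h1 : U * E * Uᴴ * A = U * (E * Matrix.diagonal (fun i => (d i : ℂ))) * Uᴴ := by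
      rw [hAeq, show U * E * Uᴴ * (U * Matrix.diagonal (fun i => (d i : ℂ)) * Uᴴ)
        = U * (E * (Uᴴ * U) * Matrix.diagonal (fun i => (d i : ℂ))) * Uᴴ by noncomm_ring,
        hU2, Matrix.mul_one]
    rw [frob_eq_trace_mul hSpsd.isHermitian, h1, Matrix.trace_mul_cycle,
      hU2, Matrix.one_mul, hE, Matrix.diagonal_mul_diagonal, Matrix.trace_diagonal, hi₀]
    simp [Pi.single_apply]

/-- `A ⪯ λ_max(A) • 1` for Hermitian `A`. -/
lemma lamMax_smul_one_sub_posSemidef (hA : A.IsHermitian) :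
    ((lamMax A : ℂ) • (1 : Matrix (Fin k) (Fin k) ℂ) - A).PosSemidef := by
  obtain ⟨U, d, hAeq, hU1, hU2, hle, -⟩ := spectral_package hA
  set lam : ℝ := lamMax A with hlam
  have key : (lam : ℂ) • (1 : Matrix (Fin k) (Fin k) ℂ) - A
      = U * Matrix.diagonal (fun i => ((lam - d i : ℝ) : ℂ)) * Uᴴ := by
    have h1 : (lam : ℂ) • (1 : Matrix (Fin k) (Fin k) ℂ)
        = U * ((lam : ℂ) • (1 : Matrix (Fin k) (Fin k) ℂ)) * Uᴴ := by
      rw [Matrix.mul_smul, Matrix.mul_one, Matrix.smul_mul, hU1]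
    conv_lhs => rw [h1, hAeq]
    rw [← Matrix.sub_mul, ← Matrix.mul_sub]
    congr 2
    rw [Matrix.smul_one_eq_diagonal, Matrix.diagonal_sub]
    congr 1
    ext i
    simp
  rw [key]
  refine Matrix.PosSemidef.mul_mul_conjTranspose_same ?_ U
  refine Matrix.PosSemidef.diagonal fun i => ?_
  rw [Complex.le_def]
  constructor
  · simpa using sub_nonneg.mpr (hle i)
  · simp

end spectral

section density

variable {k : ℕ}

lemma psd_smul_real {α : Type*} [Fintype α] {M : Matrix α α ℂ} (hM : M.PosSemidef)
    {c : ℝ} (hc : 0 ≤ c) : ((c : ℂ) • M).PosSemidef := by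
  refine Matrix.PosSemidef.of_dotProduct_mulVec_nonneg ?_ ?_
  · rw [Matrix.IsHermitian, Matrix.conjTranspose_smul, hM.isHermitian.eq]
    congr 1
    simp [Complex.ext_iff]
  · intro x
    rw [Matrix.smul_mulVec, dotProduct_smul, smul_eq_mul]
    exact mul_nonneg (by simp [Complex.le_def, hc]) (hM.dotProduct_mulVec_nonneg x)

lemma density_inv_smul_one (hk : 0 < k) :
    IsDensity ((k : ℂ)⁻¹ • (1 : Matrix (Fin k) (Fin k) ℂ)) := by
  have hk' : (0:ℝ) < (k:ℝ) := Nat.cast_pos.mpr hk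
  constructor
  · have h1 : ((k:ℂ):ℂ)⁻¹ = (((k:ℝ)⁻¹ : ℝ) : ℂ) := by push_cast; ring
    rw [show ((k : ℂ))⁻¹ = (((k:ℝ)⁻¹ : ℝ) : ℂ) by push_cast; ring]
    exact psd_smul_real Matrix.PosSemidef.one (by positivity)
  · rw [Matrix.trace_smul, Matrix.trace_one]
    simp only [smul_eq_mul, Fintype.card_fin]
    rw [inv_mul_cancel₀]
    exact_mod_cast hk'.ne'

/-- convex combination of densities is a density. -/
lemma density_convex {X Y : Matrix (Fin k) (Fin k) ℂ} (hX : IsDensity X) (hY : IsDensity Y)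
    {a b : ℝ} (ha : 0 ≤ a) (hb : 0 ≤ b) (hab : a + b = 1) :
    IsDensity ((a : ℂ) • X + (b : ℂ) • Y) := by
  constructor
  · exact (psd_smul_real hX.1 ha).add (psd_smul_real hY.1 hb)
  · rw [Matrix.trace_add, Matrix.trace_smul, Matrix.trace_smul, hX.2, hY.2]
    simp only [smul_eq_mul, mul_one]
    exact_mod_cast hab

lemma density_diag_re_le_one {X : Matrix (Fin k) (Fin k) ℂ} (hX : IsDensity X) (a : Fin k) :
    0 ≤ (X a a).re ∧ (X a a).re ≤ 1 := by
  have h1 : ∀ c, 0 ≤ (X c c).re := fun c => (Complex.le_def.mp (psd_diag_nonneg hX.1 c)).1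
  refine ⟨h1 a, ?_⟩
  have h2 : ∑ c, (X c c).re = 1 := by
    have := congrArg Complex.re hX.2
    rw [Matrix.trace, Complex.re_sum] at this
    simpa [Matrix.diag] using this
  calc (X a a).re ≤ ∑ c, (X c c).re :=
        Finset.single_le_sum (fun c _ => h1 c) (Finset.mem_univ a)
    _ = 1 := h2

/-- entries of density matrices are bounded by `1` in absolute value. -/
lemma density_entry_bound {X : Matrix (Fin k) (Fin k) ℂ} (hX : IsDensity X) (a b : Fin k) :
    ‖X a b‖ ≤ 1 := by
  have hherm : ∀ p q, star (X p q) = X q p := fun p q => hX.1.isHermitian.apply q p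
  rcases eq_or_ne (X a b) 0 with hz | hz
  · simp [hz]
  rcases eq_or_ne a b with hab | hab
  · subst hab
    have h := density_diag_re_le_one hX a
    have him : (X a a).im = 0 := (Complex.le_def.mp (psd_diag_nonneg hX.1 a)).2.symm
    have : X a a = (((X a a).re : ℝ) : ℂ) := Complex.ext rfl (by simp [him])
    rw [this, Complex.norm_real, Real.norm_eq_abs, abs_of_nonneg h.1]
    exact h.2
  -- off-diagonal case
  set z : ℂ := X a b with hzdef
  set r : ℝ := ‖z‖ with hrdef
  have hr : 0 < r := norm_pos_iff.mpr hz
  have hzz : z * (starRingEnd ℂ) z = (r:ℂ)^2 := by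
    rw [Complex.mul_conj]
    norm_cast
    exact Complex.normSq_eq_norm_sq z
  have hba : X b a = star z := (hherm a b).symm
  set x : Fin k → ℂ := Pi.single a (r:ℂ) + Pi.single b (-(starRingEnd ℂ) z) with hxdef
  have hxstar : star x = Pi.single a (r:ℂ) + Pi.single b (-z) := by
    funext j
    simp only [hxdef, Pi.star_apply, Pi.add_apply, star_add, Pi.single_apply, apply_ite,
      star_neg, star_zero, RCLike.star_def, Complex.conj_conj, Complex.conj_ofReal]
    split_ifs <;> rfl
  have hQval : star x ⬝ᵥ X *ᵥ x = (r:ℂ)^2 * (X a a + X b b) - 2*(r:ℂ)^3 := by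
    rw [hxstar, hxdef, Matrix.mulVec_add, Matrix.mulVec_single, Matrix.mulVec_single,
      add_dotProduct, single_dotProduct, single_dotProduct]
    simp only [Pi.add_apply, Pi.smul_apply, Matrix.col_apply, op_smul_eq_mul]
    rw [hba, ← hzdef]
    simp only [RCLike.star_def]
    linear_combination (X b b - 2*(r:ℂ)) * hzz
  have hQ := hX.1.dotProduct_mulVec_nonneg x
  rw [hQval] at hQ
  have hre := (Complex.le_def.mp hQ).1
  have hcast : ((r:ℂ)^2 * (X a a + X b b) - 2*(r:ℂ)^3).re
      = r^2 * ((X a a).re + (X b b).re) - 2*r^3 := by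
    rw [Complex.sub_re]
    rw [show (r:ℂ)^2 = ((r^2 : ℝ) : ℂ) by push_cast; ring,
      show (2:ℂ)*(((r:ℝ):ℂ))^3 = (((2*r^3 : ℝ)) : ℂ) by push_cast; ring]
    rw [Complex.re_ofReal_mul, Complex.add_re, Complex.ofReal_re]
  rw [hcast, show (0:ℂ).re = 0 from rfl] at hre
  have h1 := density_diag_re_le_one hX a
  have h2 := density_diag_re_le_one hX b
  nlinarith [hre, h1.1, h1.2, h2.1, h2.2, hr, mul_pos hr hr, sq_nonneg (r-1)]

end density


open scoped RealInnerProductSpace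

open scoped RealInnerProductSpace

lemma isClosed_cone_of_compact {E : Type*} [NormedAddCommGroup E] [NormedSpace ℝ E]
    {K : Set E} (hK : IsCompact K) (h0 : (0:E) ∉ K) :
    IsClosed {z : E | ∃ t : ℝ, 0 ≤ t ∧ ∃ x ∈ K, z = t • x} := by
  set C := {z : E | ∃ t : ℝ, 0 ≤ t ∧ ∃ x ∈ K, z = t • x} with hC
  rcases K.eq_empty_or_nonempty with hKe | hKne
  · have : C = ∅ := by
      ext z; simp [hC, hKe]
    rw [this]; exact isClosed_empty
  obtain ⟨x₀, hx₀K, hx₀min⟩ := hK.exists_isMinOn hKne (continuous_norm.continuousOn)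
  have hδ : 0 < ‖x₀‖ := by
    rcases eq_or_lt_of_le (norm_nonneg x₀) with h | h
    · exact absurd hx₀K (by rwa [← norm_eq_zero.mp h.symm] at h0 )
    · exact h
  apply isClosed_of_closure_subset
  intro z hz
  set T : ℝ := (‖z‖ + 1) / ‖x₀‖ with hT
  set S := (fun p : ℝ × E => p.1 • p.2) '' (Set.Icc (0:ℝ) T ×ˢ K) with hS
  have hScomp : IsCompact S := (isCompact_Icc.prod hK).image (continuous_fst.smul continuous_snd)
  have hsub : C ∩ Metric.ball z 1 ⊆ S := by
    rintro c ⟨⟨t, ht0, x, hxK, rfl⟩, hball⟩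
    refine ⟨(t, x), ⟨⟨ht0, ?_⟩, hxK⟩, rfl⟩
    have h1 : ‖t • x‖ ≤ ‖z‖ + 1 := by
      have := mem_ball_iff_norm.mp hball
      have := norm_sub_norm_le (t • x) z
      linarith
    have h2 : t * ‖x₀‖ ≤ t * ‖x‖ := by
      exact mul_le_mul_of_nonneg_left (hx₀min hxK) ht0
    rw [norm_smul, Real.norm_eq_abs, abs_of_nonneg ht0] at h1
    rw [hT, le_div_iff₀ hδ]
    nlinarith
  have hzS : z ∈ closure S := by
    refine closure_mono hsub ?_
    rw [mem_closure_iff] at hz ⊢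
    intro o ho hzo
    obtain ⟨c, hc1, hc2⟩ := hz (o ∩ Metric.ball z 1) (ho.inter Metric.isOpen_ball)
      ⟨hzo, Metric.mem_ball_self one_pos⟩
    exact ⟨c, hc1.1, hc2, hc1.2⟩
  have hzS' : z ∈ S := hScomp.isClosed.closure_eq ▸ hzS
  obtain ⟨⟨t, x⟩, ⟨⟨ht0, _⟩, hxK⟩, hpz⟩ := hzS'
  exact ⟨t, ht0, x, hxK, hpz.symm⟩

lemma exists_good_point {E : Type*} [NormedAddCommGroup E] [InnerProductSpace ℝ E]
    [FiniteDimensional ℝ E] {K : Set E} (hKconv : Convex ℝ K) (hKcomp : IsCompact K)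
    (hKne : K.Nonempty) (h0 : (0:E) ∉ K) (Λ : E →ₗ[ℝ] E)
    (hself : ∀ z ∈ K, ⟪z, Λ z⟫ = 0) :
    ∃ y ∈ K, ∀ x ∈ K, ⟪x, Λ y⟫ ≤ 0 := by
  by_contra hcon
  push_neg at hcon
  have ΛC : Continuous Λ := Λ.continuous_of_finiteDimensional
  set D := Λ '' K with hD
  have hDconv : Convex ℝ D := hKconv.linear_image Λ
  have hDcomp : IsCompact D := hKcomp.image ΛC
  set P := {v : E | ∀ x ∈ K, ⟪x, v⟫ ≤ 0} with hP
  have hPconv : Convex ℝ P := by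
    intro v hv w hw a b ha hb hab x hx
    rw [inner_add_right, real_inner_smul_right, real_inner_smul_right]
    have h1 := mul_nonneg ha (neg_nonneg.mpr (hv x hx))
    have h2 := mul_nonneg hb (neg_nonneg.mpr (hw x hx))
    nlinarith [hv x hx, hw x hx]
  have hPclosed : IsClosed P := by
    have : P = ⋂ x ∈ K, {v : E | ⟪x, v⟫ ≤ 0} := by
      ext v; simp [hP, Set.mem_iInter]
    rw [this]
    exact isClosed_biInter fun x _ => isClosed_le (continuous_const.inner continuous_id) continuous_const
  have hdisj : Disjoint D P := by
    rw [Set.disjoint_left]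
    rintro v ⟨y, hyK, rfl⟩ hvP
    obtain ⟨x, hxK, hxy⟩ := hcon y hyK
    exact absurd (hvP x hxK) (not_le.mpr hxy)
  obtain ⟨f, u, v, hfD, huv, hfP⟩ :=
    geometric_hahn_banach_compact_closed hDconv hDcomp hPconv hPclosed hdisj
  set w := (InnerProductSpace.toDual ℝ E).symm f with hw
  have hwf : ∀ z : E, ⟪w, z⟫ = f z := fun z => InnerProductSpace.toDual_symm_apply
  have h0P : (0:E) ∈ P := fun x _ => by simp
  have hv0 : v < 0 := by have := hfP 0 h0P; simpa using this
  have hPscale : ∀ p ∈ P, ∀ t : ℝ, 0 ≤ t → t • p ∈ P := by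
    intro p hp t ht x hx
    rw [real_inner_smul_right]
    exact mul_nonpos_of_nonneg_of_nonpos ht (hp x hx)
  have hPnonneg : ∀ p ∈ P, 0 ≤ f p := by
    intro p hp
    by_contra hfp
    push_neg at hfp
    have ht : 0 < (v - 1) / f p := div_pos_of_neg_of_neg (by linarith) hfp
    have := hfP _ (hPscale p hp _ ht.le)
    simp only [_root_.map_smul, smul_eq_mul] at this
    rw [div_mul_cancel₀ _ (ne_of_lt hfp)] at this
    linarith
  have hDneg : ∀ y ∈ K, f (Λ y) < 0 := fun y hy => lt_trans (lt_trans (hfD _ ⟨y, hy, rfl⟩) huv) hv0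
  -- the cone over K
  set C := {z : E | ∃ t : ℝ, 0 ≤ t ∧ ∃ x ∈ K, z = t • x} with hC
  have hCclosed : IsClosed C := isClosed_cone_of_compact hKcomp h0
  have h0C : (0:E) ∈ C := ⟨0, le_refl 0, hKne.choose, hKne.choose_spec, by simp⟩
  have hCscale : ∀ c ∈ C, ∀ s : ℝ, 0 ≤ s → s • c ∈ C := by
    rintro c ⟨t, ht, x, hx, rfl⟩ s hs
    exact ⟨s * t, mul_nonneg hs ht, x, hx, (smul_smul s t x)⟩
  have hCconv : Convex ℝ C := by
    rintro z₁ ⟨t₁, ht₁, x₁, hx₁, rfl⟩ z₂ ⟨t₂, ht₂, x₂, hx₂, rfl⟩ a b ha hb hab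
    rcases eq_or_lt_of_le (add_nonneg (mul_nonneg ha ht₁) (mul_nonneg hb ht₂)) with hs | hs
    · have h1 : a * t₁ = 0 := by nlinarith [mul_nonneg ha ht₁, mul_nonneg hb ht₂]
      have h2 : b * t₂ = 0 := by nlinarith [mul_nonneg ha ht₁, mul_nonneg hb ht₂]
      have : a • t₁ • x₁ + b • t₂ • x₂ = (0:E) := by
        rw [smul_smul, smul_smul, h1, h2]; simp
      rw [this]
      exact h0C
    · set s := a * t₁ + b * t₂ with hsdef
      refine ⟨s, hs.le, (a * t₁ / s) • x₁ + (b * t₂ / s) • x₂, ?_, ?_⟩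
      · exact hKconv hx₁ hx₂ (div_nonneg (mul_nonneg ha ht₁) hs.le)
          (div_nonneg (mul_nonneg hb ht₂) hs.le)
          (by field_simp; exact hsdef.symm)
      · rw [smul_add, smul_smul, smul_smul, smul_smul, smul_smul]
        congr 2 <;> field_simp
  have hwC : -w ∈ C := by
    by_contra hnC
    obtain ⟨g, u', hgC, hgw⟩ := geometric_hahn_banach_closed_point hCconv hCclosed hnC
    set q := (InnerProductSpace.toDual ℝ E).symm g with hq
    have hqg : ∀ z : E, ⟪q, z⟫ = g z := fun z => InnerProductSpace.toDual_symm_apply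
    have hu' : 0 < u' := by have := hgC 0 h0C; simpa using this
    have hgnonpos : ∀ c ∈ C, g c ≤ 0 := by
      intro c hc
      by_contra hgc
      push_neg at hgc
      have ht : 0 < (u' + 1) / g c := div_pos (by linarith) hgc
      have := hgC _ (hCscale c hc _ ht.le)
      simp only [_root_.map_smul, smul_eq_mul] at this
      rw [div_mul_cancel₀ _ (ne_of_gt hgc)] at this
      linarith
    have hqP : q ∈ P := by
      intro x hx
      have : g x ≤ 0 := hgnonpos x ⟨1, zero_le_one, x, hx, (one_smul ℝ x).symm⟩
      rw [real_inner_comm, hqg]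
      exact this
    have h1 : 0 ≤ f q := hPnonneg q hqP
    have h2 : g (-w) ≤ 0 := by
      rw [← hqg, inner_neg_right, real_inner_comm, hwf]
      linarith
    linarith [hgw, hu']
  obtain ⟨t, ht, y₀, hy₀K, hwt⟩ := hwC
  have hwne : w ≠ 0 := by
    obtain ⟨y₁, hy₁⟩ := hKne
    intro h
    have := hDneg y₁ hy₁
    rw [← hwf, h] at this
    simp at this
  have htpos : 0 < t := by
    rcases eq_or_lt_of_le ht with h | h
    · exfalso; apply hwne; rw [← neg_neg w, hwt, ← h]; simp
    · exact h
  have hy₀ : ∀ y ∈ K, 0 < ⟪y₀, Λ y⟫ := by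
    intro y hy
    have h1 : f (Λ y) < 0 := hDneg y hy
    have h2 : ⟪-w, Λ y⟫ > 0 := by rw [inner_neg_left, hwf]; linarith
    rw [hwt, real_inner_smul_left] at h2
    nlinarith [h2, htpos]
  exact absurd (hself y₀ hy₀K) (ne_of_gt (hy₀ y₀ hy₀K))

section embedding

variable {N : ℕ} {n : Fin N → ℕ}

/-- index type for the real coordinates of a strategy profile. -/
abbrev EIdx (n : Fin N → ℕ) : Type := ((i : Fin N) × (Fin (n i) × Fin (n i))) × Bool

/-- the euclidean space hosting profiles. -/
abbrev ESp (n : Fin N → ℕ) : Type := EuclideanSpace ℝ (EIdx n)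

/-- profile space. -/
abbrev Prof (n : Fin N → ℕ) : Type := ∀ i, Matrix (Fin (n i)) (Fin (n i)) ℂ

/-- real-linear embedding of profiles into euclidean space. -/
def embL (n : Fin N → ℕ) : Prof n →ₗ[ℝ] ESp n where
  toFun X := WithLp.toLp 2 fun q : EIdx n => if q.2 then (X q.1.1 q.1.2.1 q.1.2.2).im else (X q.1.1 q.1.2.1 q.1.2.2).re
  map_add' X Y := by
    ext q
    rcases q with ⟨⟨i, a, b⟩, s⟩
    cases s <;> simp [Complex.add_re, Complex.add_im]
  map_smul' c X := by
    ext q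
    rcases q with ⟨⟨i, a, b⟩, s⟩
    cases s <;> simp [Complex.real_smul, Complex.re_ofReal_mul, Complex.im_ofReal_mul]

/-- real-linear recovery of a profile from euclidean coordinates. -/
def recovL (n : Fin N → ℕ) : ESp n →ₗ[ℝ] Prof n where
  toFun v := fun i => Matrix.of fun a b =>
    ((v ⟨⟨i, (a, b)⟩, false⟩ : ℝ) : ℂ) + ((v ⟨⟨i, (a, b)⟩, true⟩ : ℝ) : ℂ) * Complex.I
  map_add' v w := by
    funext i a b
    simp only [PiLp.add_apply, Pi.add_apply, Matrix.add_apply, Matrix.of_apply]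
    push_cast
    ring
  map_smul' c v := by
    funext i a b
    simp only [PiLp.smul_apply, Pi.smul_apply, Matrix.smul_apply, Matrix.of_apply,
      RingHom.id_apply, smul_eq_mul, Complex.real_smul]
    push_cast
    ring

lemma recov_emb (X : Prof n) : recovL n (embL n X) = X := by
  funext i a b
  simp only [recovL, embL, LinearMap.coe_mk, AddHom.coe_mk, Matrix.of_apply]
  simp [Complex.re_add_im]

lemma emb_recov (v : ESp n) : embL n (recovL n v) = v := by
  ext q
  rcases q with ⟨⟨i, a, b⟩, s⟩
  cases s <;>
    simp [recovL, embL, Complex.add_re, Complex.add_im, Complex.ofReal_re, Complex.ofReal_im,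
      Complex.mul_re, Complex.mul_im, Complex.I_re, Complex.I_im]

lemma pairing_single {k : ℕ} (A B : Matrix (Fin k) (Fin k) ℂ) :
    (frob A B).re = ∑ p : Fin k × Fin k,
      ((A p.1 p.2).re * (B p.1 p.2).re + (A p.1 p.2).im * (B p.1 p.2).im) := by
  rw [frob_eq]
  rw [Complex.re_sum]
  simp only [Complex.re_sum]
  rw [Fintype.sum_prod_type]
  rw [Finset.sum_comm]
  refine Finset.sum_congr rfl fun p _ => Finset.sum_congr rfl fun q _ => ?_
  simp [Complex.mul_re]

open scoped RealInnerProductSpace in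
lemma emb_pairing (X Y : Prof n) :
    ⟪embL n X, embL n Y⟫ = ∑ i, (frob (X i) (Y i)).re := by
  calc ⟪embL n X, embL n Y⟫
      = ∑ q : EIdx n, (embL n X q) * (embL n Y q) := by
        rw [PiLp.inner_apply]
        simp [RCLike.inner_apply]
        exact Finset.sum_congr rfl fun _ _ => mul_comm _ _
    _ = ∑ x : (i : Fin N) × (Fin (n i) × Fin (n i)), ∑ s : Bool,
          (embL n X (x, s)) * (embL n Y (x, s)) := Fintype.sum_prod_type _
    _ = ∑ x : (i : Fin N) × (Fin (n i) × Fin (n i)),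
          ((X x.1 x.2.1 x.2.2).re * (Y x.1 x.2.1 x.2.2).re
            + (X x.1 x.2.1 x.2.2).im * (Y x.1 x.2.1 x.2.2).im) := by
        refine Finset.sum_congr rfl fun x _ => ?_
        simp only [Fintype.sum_bool, embL, LinearMap.coe_mk, AddHom.coe_mk, PiLp.toLp_apply]
        simp only [Bool.false_eq_true, if_false, if_true]
        ring
    _ = ∑ i, ∑ p : Fin (n i) × Fin (n i),
          ((X i p.1 p.2).re * (Y i p.1 p.2).re + (X i p.1 p.2).im * (Y i p.1 p.2).im) := by
        rw [← Finset.univ_sigma_univ, Finset.sum_sigma]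
    _ = ∑ i, (frob (X i) (Y i)).re := by
        refine Finset.sum_congr rfl fun i _ => (pairing_single (X i) (Y i)).symm

end embedding

section game

variable {N : ℕ} (G : SimpleGraph (Fin N)) [DecidableRel G.Adj] (n : Fin N → ℕ)
  (R : ∀ i j : Fin N, Matrix (Fin (n i) × Fin (n j)) (Fin (n i) × Fin (n j)) ℂ)

lemma payoffOp_add {k m : ℕ} (Q : Matrix (Fin k × Fin m) (Fin k × Fin m) ℂ)
    (T T' : Matrix (Fin m) (Fin m) ℂ) :
    payoffOp Q (T + T') = payoffOp Q T + payoffOp Q T' := by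
  ext a b
  simp [payoffOp, mul_add, Finset.sum_add_distrib]

lemma payoffOp_smul {k m : ℕ} (Q : Matrix (Fin k × Fin m) (Fin k × Fin m) ℂ)
    (c : ℝ) (T : Matrix (Fin m) (Fin m) ℂ) :
    payoffOp Q (c • T) = c • payoffOp Q T := by
  ext a b
  simp only [payoffOp, Matrix.of_apply, Matrix.smul_apply, Finset.smul_sum]
  refine Finset.sum_congr rfl fun x _ => Finset.sum_congr rfl fun y _ => ?_
  rw [Complex.real_smul, Complex.real_smul]
  ring

/-- `Φ` as a real-linear map on profiles. -/
def PhiL : Prof n →ₗ[ℝ] Prof n where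
  toFun X := fun i => Phi G n R X i
  map_add' X Y := by
    funext i
    simp only [Phi, Pi.add_apply]
    rw [← Finset.sum_add_distrib]
    exact Finset.sum_congr rfl fun j _ => payoffOp_add _ _ _
  map_smul' c X := by
    funext i
    simp only [Phi, Pi.smul_apply, RingHom.id_apply, Finset.smul_sum]
    exact Finset.sum_congr rfl fun j _ => payoffOp_smul _ _ _

lemma Phi_isHermitian (hR : ∀ i j, G.Adj i j → (R i j).IsHermitian)
    {X : Prof n} (hX : ∀ i, IsDensity (X i)) (i : Fin N) :
    (Phi G n R X i).IsHermitian := by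
  rw [Matrix.IsHermitian, Phi, Matrix.conjTranspose_sum]
  refine Finset.sum_congr rfl fun j hj => ?_
  exact payoffOp_isHermitian (hR i j ((SimpleGraph.mem_neighborFinset _ _ _).mp hj))
    (hX j).1.isHermitian

lemma frob_sum_right {α : Type*} [Fintype α] {β : Type*} (s : Finset β)
    (A : Matrix α α ℂ) (B : β → Matrix α α ℂ) :
    frob A (∑ j ∈ s, B j) = ∑ j ∈ s, frob A (B j) := by
  simp [frob, Matrix.mul_sum, Matrix.trace_sum]

/-- the payoff of player `i` equals `⟨X_i, Φ_i(X)⟩`, and more generally for cross profiles. -/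
lemma payoff_eq_frob_phi (hR : ∀ i j, G.Adj i j → (R i j).IsHermitian)
    {X : Prof n} (hXH : ∀ i, (X i).IsHermitian) {Y : Prof n} (i : Fin N) :
    (∑ j ∈ G.neighborFinset i, frob (R i j) ((X i) ⊗ₖ (Y j))).re
      = (frob (X i) (Phi G n R Y i)).re := by
  rw [Phi, frob_sum_right]
  congr 1
  refine Finset.sum_congr rfl fun j hj => ?_
  exact frob_kronecker_adjoint (hR i j ((SimpleGraph.mem_neighborFinset _ _ _).mp hj))
    (hXH i) (Y j)

end game

section kset

variable {N : ℕ} {n : Fin N → ℕ}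

/-- the set of density profiles. -/
def densSet (n : Fin N → ℕ) : Set (Prof n) := {X | ∀ i, IsDensity (X i)}

/-- the embedded set of density profiles. -/
def KSet (n : Fin N → ℕ) : Set (ESp n) := embL n '' densSet n

lemma mem_KSet_iff {v : ESp n} : v ∈ KSet n ↔ ∀ i, IsDensity (recovL n v i) := by
  constructor
  · rintro ⟨X, hX, rfl⟩
    rw [recov_emb]
    exact hX
  · intro h
    exact ⟨recovL n v, h, emb_recov v⟩

lemma isClosed_nonnegC : IsClosed {z : ℂ | 0 ≤ z} := by
  have : {z : ℂ | 0 ≤ z}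
      = (fun z : ℂ => z.re) ⁻¹' (Set.Ici 0) ∩ (fun z : ℂ => z.im) ⁻¹' {0} := by
    ext z
    simp only [Set.mem_setOf_eq, Set.mem_inter_iff, Set.mem_preimage, Set.mem_Ici,
      Set.mem_singleton_iff, Complex.le_def, Complex.zero_re, Complex.zero_im]
    tauto
  rw [this]
  exact (isClosed_Ici.preimage Complex.continuous_re).inter
    (isClosed_singleton.preimage Complex.continuous_im)

lemma isClosed_density {k : ℕ} :
    IsClosed {M : Matrix (Fin k) (Fin k) ℂ | IsDensity M} := by
  have : {M : Matrix (Fin k) (Fin k) ℂ | IsDensity M}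
      = {M : Matrix (Fin k) (Fin k) ℂ | Mᴴ = M}
        ∩ ((⋂ x : Fin k → ℂ, {M : Matrix (Fin k) (Fin k) ℂ | 0 ≤ star x ⬝ᵥ M *ᵥ x})
        ∩ {M : Matrix (Fin k) (Fin k) ℂ | M.trace = 1}) := by
    ext M
    simp only [Set.mem_setOf_eq, Set.mem_inter_iff, Set.mem_iInter, IsDensity,
      Matrix.posSemidef_iff_dotProduct_mulVec, Matrix.IsHermitian]
    tauto
  rw [this]
  refine (isClosed_eq (continuous_id.matrix_conjTranspose) continuous_id).inter
    (IsClosed.inter (isClosed_iInter fun x => ?_)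
      (isClosed_eq (continuous_id.matrix_trace) continuous_const))
  exact isClosed_nonnegC.preimage
    (continuous_const.dotProduct (continuous_id.matrix_mulVec continuous_const))

lemma isClosed_KSet : IsClosed (KSet n) := by
  have h1 : KSet n = (fun v : ESp n => recovL n v) ⁻¹' (densSet n) := by
    ext v
    rw [mem_KSet_iff]
    rfl
  rw [h1]
  refine IsClosed.preimage (recovL n).continuous_of_finiteDimensional ?_
  have h2 : densSet n = ⋂ i, (fun X : Prof n => X i) ⁻¹' {M | IsDensity M} := by
    ext X
    simp [densSet, Set.mem_iInter]
  rw [h2]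
  exact isClosed_iInter fun i => isClosed_density.preimage (continuous_apply i)

lemma isCompact_KSet : IsCompact (KSet n) := by
  rw [Metric.isCompact_iff_isClosed_bounded]
  refine ⟨isClosed_KSet, ?_⟩
  rw [isBounded_iff_forall_norm_le]
  refine ⟨Real.sqrt (Fintype.card (EIdx n)), ?_⟩
  rintro v ⟨X, hX, rfl⟩
  rw [EuclideanSpace.norm_eq]
  refine Real.sqrt_le_sqrt ?_
  have hb : ∀ q : EIdx n, ‖embL n X q‖ ^ 2 ≤ 1 := by
    intro q
    have h1 : |embL n X q| ≤ 1 := by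
      have hent := density_entry_bound (hX q.1.1) q.1.2.1 q.1.2.2
      rcases q with ⟨⟨i, a, b⟩, s⟩
      cases s
      · exact le_trans (Complex.abs_re_le_norm _) hent
      · exact le_trans (Complex.abs_im_le_norm _) hent
    calc ‖embL n X q‖ ^ 2 = |embL n X q| ^ 2 := by rw [Real.norm_eq_abs]
      _ ≤ 1 ^ 2 := by
          exact pow_le_pow_left₀ (abs_nonneg _) h1 2
      _ = 1 := one_pow 2
  calc ∑ q, ‖embL n X q‖ ^ 2 ≤ ∑ _q : EIdx n, (1:ℝ) :=
        Finset.sum_le_sum fun q _ => hb q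
    _ = Fintype.card (EIdx n) := by simp
    _ ≤ (Fintype.card (EIdx n) : ℝ) := le_refl _

lemma real_smul_matrix_eq {k : ℕ} (c : ℝ) (M : Matrix (Fin k) (Fin k) ℂ) :
    c • M = (c : ℂ) • M := by
  ext a b
  simp [Complex.real_smul]

lemma convex_densSet : Convex ℝ (densSet n) := by
  intro X hX Y hY a b ha hb hab
  intro i
  have h1 : (a • X + b • Y) i = (a : ℂ) • X i + (b : ℂ) • Y i := by
    simp only [Pi.add_apply, Pi.smul_apply]
    rw [real_smul_matrix_eq, real_smul_matrix_eq]
  rw [h1]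
  exact density_convex (hX i) (hY i) ha hb hab

lemma convex_KSet : Convex ℝ (KSet n) := convex_densSet.linear_image (embL n)

lemma KSet_nonempty (hn : ∀ i, 0 < n i) : (KSet n).Nonempty :=
  ⟨embL n (fun i => ((n i : ℂ))⁻¹ • 1), ⟨fun i => ((n i : ℂ))⁻¹ • 1,
    fun i => density_inv_smul_one (hn i), rfl⟩⟩

lemma zero_not_mem_KSet (hN : 0 < N) : (0 : ESp n) ∉ KSet n := by
  rintro ⟨X, hX, hemb⟩
  have h1 : X = recovL n (embL n X) := (recov_emb X).symm
  rw [hemb, map_zero] at h1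
  have h2 := (hX ⟨0, hN⟩).2
  rw [h1] at h2
  simp only [Pi.zero_apply, Matrix.trace_zero] at h2
  exact zero_ne_one h2

end kset


/-- in a zero-sum semidefinite network game, the minimum of
`Σ_i λ_max(Φ_i(X))` over profiles of density matrices is attained and equals `0`;
equivalently, the SDP minimizing `Σ_i w_i` subject to `Φ_i(X) ⪯ w_i I` over profiles of
density matrices `X` has optimal value `0`, attained at some feasible point. -/
theorem stmt11 {N : ℕ} (G : SimpleGraph (Fin N)) [DecidableRel G.Adj] (n : Fin N → ℕ)
    (hn : ∀ i, 0 < n i)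
    (R : ∀ i j : Fin N, Matrix (Fin (n i) × Fin (n j)) (Fin (n i) × Fin (n j)) ℂ)
    (hR : ∀ i j, G.Adj i j → (R i j).IsHermitian)
    (hzs : ∀ X : ∀ i, Matrix (Fin (n i)) (Fin (n i)) ℂ,
      (∀ i, IsDensity (X i)) → ∑ i, payoff G n R X i = 0) :
    IsLeast {r : ℝ | ∃ X : ∀ i, Matrix (Fin (n i)) (Fin (n i)) ℂ,
        (∀ i, IsDensity (X i)) ∧ r = ∑ i, lamMax (Phi G n R X i)} 0 ∧
    IsLeast {r : ℝ | ∃ (w : Fin N → ℝ) (X : ∀ i, Matrix (Fin (n i)) (Fin (n i)) ℂ),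
        (∀ i, IsDensity (X i)) ∧
        (∀ i, ((w i : ℂ) • (1 : Matrix (Fin (n i)) (Fin (n i)) ℂ)
          - Phi G n R X i).PosSemidef) ∧
        r = ∑ i, w i} 0 := by
  rcases Nat.eq_zero_or_pos N with hN0 | hN
  · subst hN0
    constructor
    · exact ⟨⟨fun i => i.elim0, fun i => i.elim0, by simp⟩,
        by rintro r ⟨X, hX, rfl⟩; simp⟩
    · exact ⟨⟨fun i => i.elim0, fun i => i.elim0, fun i => i.elim0, fun i => i.elim0, by simp⟩,
        by rintro r ⟨w, X, hX, hw, rfl⟩; simp⟩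
  -- main case
  have hdiag : ∀ X : Prof n, (∀ i, IsDensity (X i)) →
      ∑ i, (frob (X i) (Phi G n R X i)).re = 0 := by
    intro X hX
    have hpay : ∀ i, (frob (X i) (Phi G n R X i)).re = payoff G n R X i := fun i =>
      (payoff_eq_frob_phi G n R hR (fun j => (hX j).1.isHermitian) i).symm
    rw [Finset.sum_congr rfl fun i _ => hpay i]
    exact hzs X hX
  have hherm : ∀ (X : Prof n), (∀ i, IsDensity (X i)) → ∀ i,
      (Phi G n R X i).IsHermitian := fun X hX => Phi_isHermitian G n R hR hX
  -- the payoff linear operator on euclidean space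
  set Λ : ESp n →ₗ[ℝ] ESp n := (embL n).comp ((PhiL G n R).comp (recovL n)) with hΛ
  have hpair : ∀ X W : Prof n, ⟪embL n W, Λ (embL n X)⟫
      = ∑ i, (frob (W i) (Phi G n R X i)).re := by
    intro X W
    rw [hΛ]
    simp only [LinearMap.comp_apply]
    rw [recov_emb]
    exact emb_pairing W (fun i => Phi G n R X i)
  have hself : ∀ z ∈ KSet n, ⟪z, Λ z⟫ = 0 := by
    rintro z ⟨X, hX, rfl⟩
    rw [hpair X X]
    exact hdiag X hX
  obtain ⟨y, hyK, hygood⟩ := exists_good_point (convex_KSet) (isCompact_KSet)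
    (KSet_nonempty hn) (zero_not_mem_KSet hN) Λ hself
  obtain ⟨Y, hYdens, hYemb⟩ := hyK
  have hkey : ∀ W : Prof n, (∀ i, IsDensity (W i)) →
      ∑ i, (frob (W i) (Phi G n R Y i)).re ≤ 0 := by
    intro W hW
    have h := hygood (embL n W) ⟨W, hW, rfl⟩
    rw [← hYemb, hpair Y W] at h
    exact h
  have hlower1 : ∀ (X : Prof n), (∀ i, IsDensity (X i)) →
      0 ≤ ∑ i, lamMax (Phi G n R X i) := by
    intro X hX
    calc (0:ℝ) = ∑ i, (frob (X i) (Phi G n R X i)).re := (hdiag X hX).symm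
      _ ≤ ∑ i, lamMax (Phi G n R X i) := Finset.sum_le_sum fun i _ =>
          re_frob_le_lamMax (hn i) (hX i) (hherm X hX i)
  choose Sf hSf1 hSf2 using fun i => exists_density_lamMax (hn i) (hherm Y hYdens i)
  have hval : ∑ i, lamMax (Phi G n R Y i) = 0 := by
    refine le_antisymm ?_ (hlower1 Y hYdens)
    calc ∑ i, lamMax (Phi G n R Y i) = ∑ i, (frob (Sf i) (Phi G n R Y i)).re :=
          Finset.sum_congr rfl fun i _ => (hSf2 i).symm
      _ ≤ 0 := hkey Sf hSf1
  constructor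
  · refine ⟨⟨Y, hYdens, hval.symm⟩, ?_⟩
    rintro r ⟨X, hX, rfl⟩
    exact hlower1 X hX
  · refine ⟨⟨fun i => lamMax (Phi G n R Y i), Y, hYdens, ?_, hval.symm⟩, ?_⟩
    · intro i
      exact lamMax_smul_one_sub_posSemidef (hherm Y hYdens i)
    · rintro r ⟨w, X, hX, hPSD, rfl⟩
      have hper : ∀ i, (frob (X i) (Phi G n R X i)).re ≤ w i := by
        intro i
        have h0 := frob_psd_psd_re_nonneg (hX i).1 (hPSD i)
        have hexp : frob (X i) ((w i : ℂ) • 1 - Phi G n R X i)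
            = (w i : ℂ) - frob (X i) (Phi G n R X i) := by
          rw [frob_sub_right, frob_smul_right, frob_one_right, (hX i).2]
          simp
        rw [hexp] at h0
        have h1 : 0 ≤ w i - (frob (X i) (Phi G n R X i)).re := by
          have := h0
          rw [Complex.sub_re, Complex.ofReal_re] at this
          exact this
        linarith
      calc (0:ℝ) = ∑ i, (frob (X i) (Phi G n R X i)).re := (hdiag X hX).symm
        _ ≤ ∑ i, w i := Finset.sum_le_sum fun i _ => hper i


end
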